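/- Under the hypotheses of the global optimality theorem—(ς̄,σ̄₁,σ̄₂) ∈ S⁺♯ with vanishing Fréchet derivative of P^d, x̄ = G(ς̄,σ̄₁)⁻¹ c, v̄ᵢ = (fᵢ + σ̄₁ᵢ + σ̄₂ᵢ)/(2 σ̄₂ᵢ)—the pair (x̄,v̄) minimizes P even over the larger relaxed region X̄_v = {(x,v) ∈ ℝⁿ×ℝⁿ : xᵢ² ≤ vᵢ and vᵢ(vᵢ − 1) ≤ 0 for all i}; that is, P(x̄,v̄) ≤ P(x,v) for all (x,v) ∈ X̄_v. -/

import Mathlib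

open Matrix BigOperators

set_option maxHeartbeats 1000000
set_option maxRecDepth 8000

attribute [local instance] Matrix.linftyOpNormedRing Matrix.linftyOpNormedAlgebra

/-- `G(ς,σ₁) = A + ς B + 2 diag(σ₁)`. -/
noncomputable def Gm {n : ℕ} (A B : Matrix (Fin n) (Fin n) ℝ) (ς : ℝ) (σ₁ : Fin n → ℝ) :
    Matrix (Fin n) (Fin n) ℝ :=
  A + ς • B + (2 : ℝ) • Matrix.diagonal σ₁

/-- The primal objective `P(x,v)`. -/
noncomputable def Pobj {n : ℕ} (A B : Matrix (Fin n) (Fin n) ℝ) (α : ℝ) (c f : Fin n → ℝ)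
    (x v : Fin n → ℝ) : ℝ :=
  (1/2) * (x ⬝ᵥ A.mulVec x) - c ⬝ᵥ x
    + (1/2) * ((1/2) * (x ⬝ᵥ B.mulVec x) - α)^2 - f ⬝ᵥ v

/-- The canonical dual function `P^d(ς,σ₁,σ₂)`. -/
noncomputable def Pd {n : ℕ} (A B : Matrix (Fin n) (Fin n) ℝ) (α : ℝ) (c f : Fin n → ℝ)
    (p : ℝ × (Fin n → ℝ) × (Fin n → ℝ)) : ℝ :=
  -(1/2) * (c ⬝ᵥ (Gm A B p.1 p.2.1)⁻¹.mulVec c)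
    - (1/4) * ∑ i, (f i + p.2.1 i + p.2.2 i)^2 / p.2.2 i
    - (1/2) * p.1^2 - α * p.1

/-- The dual feasible set `S⁺♯`. -/
def Ssharp {n : ℕ} (A B : Matrix (Fin n) (Fin n) ℝ) (α : ℝ) :
    Set (ℝ × (Fin n → ℝ) × (Fin n → ℝ)) :=
  {p | -α ≤ p.1 ∧ (∀ i, 0 ≤ p.2.1 i) ∧ (∀ i, 0 < p.2.2 i) ∧ (Gm A B p.1 p.2.1).PosDef}

/-- The relaxed feasible region `X̄_v`. -/
def XvRelaxed (n : ℕ) : Set ((Fin n → ℝ) × (Fin n → ℝ)) :=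
  {p | ∀ i, (p.1 i)^2 ≤ p.2 i ∧ p.2 i * (p.2 i - 1) ≤ 0}

variable {n : ℕ}

noncomputable def quadCLM (c : Fin n → ℝ) : Matrix (Fin n) (Fin n) ℝ →L[ℝ] ℝ :=
  LinearMap.toContinuousLinearMap
    { toFun := fun M => c ⬝ᵥ M.mulVec c
      map_add' := by intro M N; simp [Matrix.add_mulVec, dotProduct_add]
      map_smul' := by intro r M; simp [Matrix.smul_mulVec, dotProduct_smul] }

@[simp] lemma quadCLM_apply (c : Fin n → ℝ) (M : Matrix (Fin n) (Fin n) ℝ) :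
    quadCLM c M = c ⬝ᵥ M.mulVec c := rfl

lemma hasDerivAt_quad_inv (c : Fin n → ℝ) {G : Matrix (Fin n) (Fin n) ℝ}
    (hG : IsUnit G) (M : Matrix (Fin n) (Fin n) ℝ) :
    HasDerivAt (fun t : ℝ => c ⬝ᵥ ((G + t • M)⁻¹).mulVec c)
      (-(c ⬝ᵥ ((G⁻¹ * M * G⁻¹)).mulVec c)) 0 := by
  obtain ⟨u, rfl⟩ := hG
  have h1 : HasDerivAt (fun t : ℝ => (u : Matrix (Fin n) (Fin n) ℝ) + t • M) M 0 := by
    exact (((hasDerivAt_id (0:ℝ)).smul_const M).const_add (u : Matrix (Fin n) (Fin n) ℝ)).congr_deriv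
      (by simp)
  have h2 : HasFDerivAt Ring.inverse
      (-ContinuousLinearMap.mulLeftRight ℝ _ (↑u⁻¹) (↑u⁻¹))
      ((u : Matrix (Fin n) (Fin n) ℝ) + (0:ℝ) • M) := by
    simpa using hasFDerivAt_ringInverse (𝕜 := ℝ) u
  have h3 := h2.comp_hasDerivAt 0 h1
  have h4 := (quadCLM c).hasFDerivAt.comp_hasDerivAt 0 h3
  simp only [ContinuousLinearMap.neg_apply, ContinuousLinearMap.mulLeftRight_apply,
    map_neg, quadCLM_apply] at h4
  have heq : ∀ N : Matrix (Fin n) (Fin n) ℝ, N⁻¹ = Ring.inverse N :=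
    fun N => Matrix.nonsing_inv_eq_ringInverse N
  have hui : ((u⁻¹ : (Matrix (Fin n) (Fin n) ℝ)ˣ) : Matrix (Fin n) (Fin n) ℝ)
      = ((u : Matrix (Fin n) (Fin n) ℝ))⁻¹ := by
    rw [heq, Ring.inverse_unit]
  simp only [Function.comp_def, hui] at h4
  simp only [heq]
  exact h4.congr_deriv (by simp only [Ring.inverse_unit, hui]; rw [← quadCLM_apply]; exact map_neg (quadCLM c) _)

lemma Gm_transpose {A B : Matrix (Fin n) (Fin n) ℝ} (hA : A.IsSymm) (hB : B.PosSemidef)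
    (ς : ℝ) (σ : Fin n → ℝ) : (Gm A B ς σ)ᵀ = Gm A B ς σ := by
  have hBs : Bᵀ = B := by
    have := hB.1
    rwa [Matrix.IsHermitian, Matrix.conjTranspose_eq_transpose_of_trivial] at this
  simp [Gm, Matrix.transpose_add, Matrix.transpose_smul, hA.eq, hBs, Matrix.diagonal_transpose]

lemma quad_inv_conv {G M : Matrix (Fin n) (Fin n) ℝ} (hGs : Gᵀ = G) (c : Fin n → ℝ) :
    c ⬝ᵥ ((G⁻¹ * M * G⁻¹)).mulVec c = (G⁻¹.mulVec c) ⬝ᵥ M.mulVec (G⁻¹.mulVec c) := by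
  have hs : (G⁻¹)ᵀ = G⁻¹ := by rw [Matrix.transpose_nonsing_inv, hGs]
  rw [← Matrix.mulVec_mulVec, ← Matrix.mulVec_mulVec, Matrix.dotProduct_mulVec,
    ← Matrix.mulVec_transpose, hs]

lemma G_mulVec_xb {G : Matrix (Fin n) (Fin n) ℝ} (hG : IsUnit G) (c : Fin n → ℝ) :
    G.mulVec (G⁻¹.mulVec c) = c := by
  rw [Matrix.mulVec_mulVec, Matrix.mul_nonsing_inv _ (Matrix.isUnit_iff_isUnit_det G |>.mp hG),
    Matrix.one_mulVec]

lemma quad_Gm (A B : Matrix (Fin n) (Fin n) ℝ) (ς : ℝ) (σ : Fin n → ℝ) (y : Fin n → ℝ) :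
    y ⬝ᵥ (Gm A B ς σ).mulVec y
      = y ⬝ᵥ A.mulVec y + ς * (y ⬝ᵥ B.mulVec y) + 2 * ∑ i, σ i * y i ^ 2 := by
  simp only [Gm, Matrix.add_mulVec, Matrix.smul_mulVec, dotProduct_add,
    dotProduct_smul, smul_eq_mul]
  congr 1
  simp only [dotProduct, Matrix.mulVec_diagonal, Finset.mul_sum]
  exact Finset.sum_congr rfl fun i _ => by ring

lemma quad_two_diag (σ : Fin n → ℝ) (y : Fin n → ℝ) :
    y ⬝ᵥ ((2:ℝ) • Matrix.diagonal σ).mulVec y = 2 * ∑ i, σ i * y i ^ 2 := by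
  rw [Matrix.smul_mulVec, dotProduct_smul]
  simp only [smul_eq_mul, dotProduct, Matrix.mulVec_diagonal, Finset.mul_sum]
  exact Finset.sum_congr rfl fun i _ => by ring

lemma quad_diag_single (i : Fin n) (y : Fin n → ℝ) :
    y ⬝ᵥ ((2:ℝ) • Matrix.diagonal (Pi.single i 1 : Fin n → ℝ)).mulVec y = 2 * y i ^ 2 := by
  rw [quad_two_diag]
  congr 1
  rw [Finset.sum_congr rfl (fun j (_ : j ∈ Finset.univ) =>
    show (Pi.single i 1 : Fin n → ℝ) j * y j ^ 2 = if j = i then y j ^2 else 0 by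
      by_cases h : j = i <;> simp [Pi.single_apply, h])]
  simp


section stat
variable {A B : Matrix (Fin n) (Fin n) ℝ} {α : ℝ} {c f : Fin n → ℝ}
  {ςb : ℝ} {σ1b σ2b : Fin n → ℝ}

lemma stat1 (h0 : HasFDerivAt (Pd A B α c f) (0 : (ℝ × (Fin n → ℝ) × (Fin n → ℝ)) →L[ℝ] ℝ) (ςb, σ1b, σ2b))
    (hGu : IsUnit (Gm A B ςb σ1b)) :
    (1/2) * (c ⬝ᵥ ((Gm A B ςb σ1b)⁻¹ * B * (Gm A B ςb σ1b)⁻¹).mulVec c) - ςb - α = 0 := by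
  set G := Gm A B ςb σ1b with hG
  have hline : HasDerivAt
      (fun t : ℝ => ((ςb + t, σ1b, σ2b) : ℝ × (Fin n → ℝ) × (Fin n → ℝ)))
      ((1 : ℝ), (0 : Fin n → ℝ), (0 : Fin n → ℝ)) 0 := by
    have h1 : HasDerivAt (fun t : ℝ => ςb + t) 1 0 := by
      simpa using (hasDerivAt_id (0:ℝ)).const_add ςb
    exact h1.prodMk (hasDerivAt_const 0 (σ1b, σ2b))
  have h0' : HasFDerivAt (Pd A B α c f) (0 : (ℝ × (Fin n → ℝ) × (Fin n → ℝ)) →L[ℝ] ℝ) ((ςb + (0:ℝ), σ1b, σ2b)) := by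
    simpa using h0
  have hcomp := h0'.comp_hasDerivAt 0 hline
  simp only [ContinuousLinearMap.zero_apply] at hcomp
  have hGl : ∀ t : ℝ, Gm A B (ςb + t) σ1b = G + t • B := by
    intro t; simp only [hG, Gm, add_smul]; abel
  have hfun : (fun t : ℝ => Pd A B α c f (ςb + t, σ1b, σ2b))
      = fun t : ℝ => -(1/2) * (c ⬝ᵥ ((G + t • B)⁻¹).mulVec c)
        - (1/4) * ∑ i, (f i + σ1b i + σ2b i)^2 / σ2b i
        - (1/2) * (ςb + t)^2 - α * (ςb + t) := by
    funext t
    rw [Pd, hGl t]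
  rw [Function.comp_def, hfun] at hcomp
  have hς : HasDerivAt (fun t : ℝ => ςb + t) 1 0 := by
    simpa using (hasDerivAt_id (0:ℝ)).const_add ςb
  have h1 := (hasDerivAt_quad_inv c hGu B).const_mul (-(1/2) : ℝ)
  have h2 := (hς.pow 2).const_mul ((1/2) : ℝ)
  have h3 := hς.const_mul α
  have htot := ((h1.sub_const
      ((1/4) * ∑ i, (f i + σ1b i + σ2b i)^2 / σ2b i)).sub h2).sub h3
  have hval := htot.unique hcomp
  simp only [mul_one, pow_one, add_zero] at hval
  rw [hG]
  nlinarith [hval]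
end stat

section stat2
variable {A B : Matrix (Fin n) (Fin n) ℝ} {α : ℝ} {c f : Fin n → ℝ}
  {ςb : ℝ} {σ1b σ2b : Fin n → ℝ}

lemma stat2 (h0 : HasFDerivAt (Pd A B α c f)
      (0 : (ℝ × (Fin n → ℝ) × (Fin n → ℝ)) →L[ℝ] ℝ) (ςb, σ1b, σ2b))
    (hGu : IsUnit (Gm A B ςb σ1b)) (i : Fin n) :
    (1/2) * (c ⬝ᵥ ((Gm A B ςb σ1b)⁻¹ * ((2:ℝ) • Matrix.diagonal (Pi.single i 1))
      * (Gm A B ςb σ1b)⁻¹).mulVec c) - (f i + σ1b i + σ2b i) / (2 * σ2b i) = 0 := by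
  set G := Gm A B ςb σ1b with hG
  set e : Fin n → ℝ := Pi.single i 1 with he
  set M : Matrix (Fin n) (Fin n) ℝ := (2:ℝ) • Matrix.diagonal e with hM
  have hline : HasDerivAt
      (fun t : ℝ => ((ςb, σ1b + t • e, σ2b) : ℝ × (Fin n → ℝ) × (Fin n → ℝ)))
      ((0 : ℝ), e, (0 : Fin n → ℝ)) 0 := by
    have h1 : HasDerivAt (fun t : ℝ => σ1b + t • e) e 0 := by
      simpa using ((hasDerivAt_id (0:ℝ)).smul_const e).const_add σ1b
    exact (hasDerivAt_const 0 ςb).prodMk (h1.prodMk (hasDerivAt_const 0 σ2b))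
  have h0' : HasFDerivAt (Pd A B α c f)
      (0 : (ℝ × (Fin n → ℝ) × (Fin n → ℝ)) →L[ℝ] ℝ) ((ςb, σ1b + (0:ℝ) • e, σ2b)) := by
    simpa using h0
  have hcomp := h0'.comp_hasDerivAt 0 hline
  simp only [ContinuousLinearMap.zero_apply] at hcomp
  have hGl : ∀ t : ℝ, Gm A B ςb (σ1b + t • e) = G + t • M := by
    intro t
    ext a b
    simp only [hG, hM, Gm, Matrix.add_apply, Matrix.smul_apply, Matrix.diagonal_apply,
      Pi.add_apply, Pi.smul_apply, smul_eq_mul]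
    split_ifs <;> ring
  have hfun : (fun t : ℝ => Pd A B α c f (ςb, σ1b + t • e, σ2b))
      = fun t : ℝ => -(1/2) * (c ⬝ᵥ ((G + t • M)⁻¹).mulVec c)
        - (1/4) * ∑ j, (f j + (σ1b j + t * e j) + σ2b j)^2 / σ2b j
        - (1/2) * ςb^2 - α * ςb := by
    funext t
    rw [Pd, hGl t]
    simp only [Pi.add_apply, Pi.smul_apply, smul_eq_mul]
  rw [Function.comp_def, hfun] at hcomp
  have hterm : ∀ j : Fin n, HasDerivAt
      (fun t : ℝ => (f j + (σ1b j + t * e j) + σ2b j)^2 / σ2b j)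
      (2 * (f j + σ1b j + σ2b j) * e j / σ2b j) 0 := by
    intro j
    have hb : HasDerivAt (fun t : ℝ => f j + (σ1b j + t * e j) + σ2b j) (e j) 0 := by
      simpa using
        ((((hasDerivAt_id (0:ℝ)).mul_const (e j)).const_add (σ1b j)).const_add
          (f j)).add_const (σ2b j)
    have h2 := (hb.pow 2).div_const (σ2b j)
    exact h2.congr_deriv (by simp)
  have hsum := HasDerivAt.fun_sum (fun j (_ : j ∈ Finset.univ) => hterm j)
  have h1 := (hasDerivAt_quad_inv c hGu M).const_mul (-(1/2) : ℝ)
  have htot := (((h1.sub (hsum.const_mul ((1/4) : ℝ))).sub_const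
      ((1/2) * ςb^2)).sub_const (α * ςb))
  have hval := htot.unique hcomp
  have hsv : ∑ j, 2 * (f j + σ1b j + σ2b j) * e j / σ2b j
      = 2 * (f i + σ1b i + σ2b i) / σ2b i := by
    rw [Finset.sum_congr rfl (fun j (_ : j ∈ Finset.univ) =>
      show 2 * (f j + σ1b j + σ2b j) * e j / σ2b j
        = if j = i then 2 * (f j + σ1b j + σ2b j) / σ2b j else 0 by
        by_cases h : j = i <;> simp [he, Pi.single_apply, h])]
    simp
  rw [hsv] at hval
  have harith : (f i + σ1b i + σ2b i) / (2 * σ2b i)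
      = 1/4 * (2 * (f i + σ1b i + σ2b i) / σ2b i) := by ring
  rw [harith]
  linarith [hval]
end stat2

section stat3
variable {A B : Matrix (Fin n) (Fin n) ℝ} {α : ℝ} {c f : Fin n → ℝ}
  {ςb : ℝ} {σ1b σ2b : Fin n → ℝ}

lemma stat3 (h0 : HasFDerivAt (Pd A B α c f)
      (0 : (ℝ × (Fin n → ℝ) × (Fin n → ℝ)) →L[ℝ] ℝ) (ςb, σ1b, σ2b))
    (hσ2 : ∀ j, 0 < σ2b j) (i : Fin n) :
    2 * (f i + σ1b i + σ2b i) * σ2b i - (f i + σ1b i + σ2b i)^2 = 0 := by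
  set e : Fin n → ℝ := Pi.single i 1 with he
  have hline : HasDerivAt
      (fun t : ℝ => ((ςb, σ1b, σ2b + t • e) : ℝ × (Fin n → ℝ) × (Fin n → ℝ)))
      ((0 : ℝ), (0 : Fin n → ℝ), e) 0 := by
    have h1 : HasDerivAt (fun t : ℝ => σ2b + t • e) e 0 := by
      simpa using ((hasDerivAt_id (0:ℝ)).smul_const e).const_add σ2b
    exact (hasDerivAt_const 0 ςb).prodMk ((hasDerivAt_const 0 σ1b).prodMk h1)
  have h0' : HasFDerivAt (Pd A B α c f)
      (0 : (ℝ × (Fin n → ℝ) × (Fin n → ℝ)) →L[ℝ] ℝ) ((ςb, σ1b, σ2b + (0:ℝ) • e)) := by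
    simpa using h0
  have hcomp := h0'.comp_hasDerivAt 0 hline
  simp only [ContinuousLinearMap.zero_apply] at hcomp
  have hfun : (fun t : ℝ => Pd A B α c f (ςb, σ1b, σ2b + t • e))
      = fun t : ℝ => -(1/2) * (c ⬝ᵥ ((Gm A B ςb σ1b)⁻¹).mulVec c)
        - (1/4) * ∑ j, (f j + σ1b j + (σ2b j + t * e j))^2 / (σ2b j + t * e j)
        - (1/2) * ςb^2 - α * ςb := by
    funext t
    rw [Pd]
    simp only [Pi.add_apply, Pi.smul_apply, smul_eq_mul]
  rw [Function.comp_def, hfun] at hcomp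
  have hterm : ∀ j : Fin n, HasDerivAt
      (fun t : ℝ => (f j + σ1b j + (σ2b j + t * e j))^2 / (σ2b j + t * e j))
      ((2 * (f j + σ1b j + σ2b j) * σ2b j - (f j + σ1b j + σ2b j)^2) * e j / (σ2b j)^2) 0 := by
    intro j
    have hb : HasDerivAt (fun t : ℝ => f j + σ1b j + (σ2b j + t * e j)) (e j) 0 := by
      simpa using (((hasDerivAt_id (0:ℝ)).mul_const (e j)).const_add (σ2b j)).const_add
        (f j + σ1b j)
    have hd : HasDerivAt (fun t : ℝ => σ2b j + t * e j) (e j) 0 := by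
      simpa using ((hasDerivAt_id (0:ℝ)).mul_const (e j)).const_add (σ2b j)
    have hnz : σ2b j + 0 * e j ≠ 0 := by simpa using (hσ2 j).ne'
    have h2 := (hb.pow 2).div hd hnz
    exact h2.congr_deriv (by simp; ring)
  have hsum := HasDerivAt.fun_sum (fun j (_ : j ∈ Finset.univ) => hterm j)
  have h1 : HasDerivAt (fun _ : ℝ => -(1/2) * (c ⬝ᵥ ((Gm A B ςb σ1b)⁻¹).mulVec c))
      (0 : ℝ) 0 := hasDerivAt_const 0 _
  have htot := (((h1.sub (hsum.const_mul ((1/4) : ℝ))).sub_const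
      ((1/2) * ςb^2)).sub_const (α * ςb))
  have hval := htot.unique hcomp
  have hsv : ∑ j, (2 * (f j + σ1b j + σ2b j) * σ2b j - (f j + σ1b j + σ2b j)^2) * e j / (σ2b j)^2
      = (2 * (f i + σ1b i + σ2b i) * σ2b i - (f i + σ1b i + σ2b i)^2) / (σ2b i)^2 := by
    rw [Finset.sum_congr rfl (fun j (_ : j ∈ Finset.univ) =>
      show (2 * (f j + σ1b j + σ2b j) * σ2b j - (f j + σ1b j + σ2b j)^2) * e j / (σ2b j)^2
        = if j = i then (2 * (f j + σ1b j + σ2b j) * σ2b j - (f j + σ1b j + σ2b j)^2) / (σ2b j)^2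
          else 0 by
        by_cases h : j = i <;> simp [he, Pi.single_apply, h])]
    simp
  rw [hsv] at hval
  have hq : (σ2b i)^2 ≠ 0 := pow_ne_zero _ (hσ2 i).ne'
  have : (2 * (f i + σ1b i + σ2b i) * σ2b i - (f i + σ1b i + σ2b i)^2) / (σ2b i)^2 = 0 := by
    linarith [hval]
  field_simp at this
  linear_combination (div_eq_zero_iff.mp this).resolve_right hq
end stat3

section diff
variable {A B : Matrix (Fin n) (Fin n) ℝ} {α : ℝ} {c f : Fin n → ℝ}

noncomputable def diagCLM : (Fin n → ℝ) →L[ℝ] Matrix (Fin n) (Fin n) ℝ :=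
  LinearMap.toContinuousLinearMap (Matrix.diagonalLinearMap (Fin n) ℝ ℝ)

@[simp] lemma diagCLM_apply (v : Fin n → ℝ) : (diagCLM v : Matrix (Fin n) (Fin n) ℝ)
    = Matrix.diagonal v := by
  simp [diagCLM, Matrix.diagonalLinearMap]

lemma differentiableAt_Pd {ςb : ℝ} {σ1b σ2b : Fin n → ℝ}
    (hGu : IsUnit (Gm A B ςb σ1b)) (hσ2 : ∀ j, σ2b j ≠ 0) :
    DifferentiableAt ℝ (Pd A B α c f) (ςb, σ1b, σ2b) := by
  set p : ℝ × (Fin n → ℝ) × (Fin n → ℝ) := (ςb, σ1b, σ2b) with hp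
  have hΦ : DifferentiableAt ℝ
      (fun q : ℝ × (Fin n → ℝ) × (Fin n → ℝ) => Gm A B q.1 q.2.1) p := by
    have h1 : DifferentiableAt ℝ
        (fun q : ℝ × (Fin n → ℝ) × (Fin n → ℝ) => q.1 • B) p :=
      differentiableAt_fst.smul_const B
    have h2 : DifferentiableAt ℝ
        (fun q : ℝ × (Fin n → ℝ) × (Fin n → ℝ) => (diagCLM q.2.1 : Matrix (Fin n) (Fin n) ℝ)) p :=
      diagCLM.differentiableAt.comp p (differentiableAt_snd.fst)
    have h2' : DifferentiableAt ℝ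
        (fun q : ℝ × (Fin n → ℝ) × (Fin n → ℝ) =>
          ((2:ℝ) • Matrix.diagonal q.2.1 : Matrix (Fin n) (Fin n) ℝ)) p := by
      have := h2.const_smul (2:ℝ)
      exact this
    exact ((differentiableAt_const A).add h1).add h2'
  have hinv : DifferentiableAt ℝ
      (fun q : ℝ × (Fin n → ℝ) × (Fin n → ℝ) =>
        c ⬝ᵥ ((Gm A B q.1 q.2.1)⁻¹).mulVec c) p := by
    have heq : (fun q : ℝ × (Fin n → ℝ) × (Fin n → ℝ) =>
        c ⬝ᵥ ((Gm A B q.1 q.2.1)⁻¹).mulVec c)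
        = fun q => quadCLM c (Ring.inverse (Gm A B q.1 q.2.1)) := by
      funext q
      rw [quadCLM_apply, Matrix.nonsing_inv_eq_ringInverse]
    rw [heq]
    exact (quadCLM c).differentiableAt.comp p
      (DifferentiableAt.comp (g := @Ring.inverse (Matrix (Fin n) (Fin n) ℝ) _) p
        (differentiableAt_inverse (𝕜 := ℝ) (R := Matrix (Fin n) (Fin n) ℝ) (x := Gm A B p.1 p.2.1)
        (by rw [hp]; exact hGu)) hΦ)
  have hsum : DifferentiableAt ℝ
      (fun q : ℝ × (Fin n → ℝ) × (Fin n → ℝ) =>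
        ∑ j, (f j + q.2.1 j + q.2.2 j)^2 / q.2.2 j) p := by
    apply DifferentiableAt.fun_sum
    intro j _
    have hc1 : DifferentiableAt ℝ
        (fun q : ℝ × (Fin n → ℝ) × (Fin n → ℝ) => q.2.1 j) p :=
      (ContinuousLinearMap.proj j : (Fin n → ℝ) →L[ℝ] ℝ).differentiableAt.comp p
        (differentiableAt_snd.fst)
    have hc2 : DifferentiableAt ℝ
        (fun q : ℝ × (Fin n → ℝ) × (Fin n → ℝ) => q.2.2 j) p :=
      (ContinuousLinearMap.proj j : (Fin n → ℝ) →L[ℝ] ℝ).differentiableAt.comp p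
        (differentiableAt_snd.snd)
    have hnum := (((differentiableAt_const (f j)).add hc1).add hc2).pow 2
    exact hnum.mul (hc2.inv (hσ2 j))
  have h1 := hinv.const_mul (-(1/2) : ℝ)
  have h2 := hsum.const_mul ((1/4) : ℝ)
  have h3 : DifferentiableAt ℝ
      (fun q : ℝ × (Fin n → ℝ) × (Fin n → ℝ) => (1/2 : ℝ) * q.1^2) p :=
    (differentiableAt_fst.pow 2).const_mul ((1/2) : ℝ)
  have h4 : DifferentiableAt ℝ
      (fun q : ℝ × (Fin n → ℝ) × (Fin n → ℝ) => α * q.1) p :=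
    differentiableAt_fst.const_mul α
  have hPd : Pd A B α c f = fun q : ℝ × (Fin n → ℝ) × (Fin n → ℝ) =>
      -(1/2) * (c ⬝ᵥ ((Gm A B q.1 q.2.1)⁻¹).mulVec c)
        - (1/4) * ∑ j, (f j + q.2.1 j + q.2.2 j)^2 / q.2.2 j
        - (1/2) * q.1^2 - α * q.1 := rfl
  rw [hPd]
  exact ((h1.sub h2).sub h3).sub h4
end diff

noncomputable def Xi {n : ℕ} (G : Matrix (Fin n) (Fin n) ℝ) (c f σ1 σ2 : Fin n → ℝ)
    (α ς : ℝ) (y w : Fin n → ℝ) : ℝ :=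
  (1/2) * (y ⬝ᵥ G.mulVec y) - c ⬝ᵥ y - α * ς - (1/2) * ς^2
    + ∑ i, (σ2 i * w i^2 - (f i + σ1 i + σ2 i) * w i)

section algebra
variable {A B : Matrix (Fin n) (Fin n) ℝ} {α : ℝ} {c f : Fin n → ℝ}
  {ςb : ℝ} {σ1b σ2b : Fin n → ℝ}

lemma claim1 (A B : Matrix (Fin n) (Fin n) ℝ) (α : ℝ) (c f : Fin n → ℝ)
    (ςb : ℝ) (σ1b σ2b : Fin n → ℝ) (y w : Fin n → ℝ) :
    Pobj A B α c f y w - Xi (Gm A B ςb σ1b) c f σ1b σ2b α ςb y w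
      = (1/2) * ((1/2) * (y ⬝ᵥ B.mulVec y) - α - ςb)^2
        + ∑ i, (σ1b i * (w i - y i^2) + σ2b i * (w i - w i^2)) := by
  have hsplit : ∑ i, (σ1b i * (w i - y i^2) + σ2b i * (w i - w i^2))
      = -(∑ i, f i * w i) - ∑ i, σ1b i * y i ^ 2
        - ∑ i, (σ2b i * w i^2 - (f i + σ1b i + σ2b i) * w i) := by
    rw [Finset.sum_congr rfl (fun i (_ : i ∈ Finset.univ) =>
      show σ1b i * (w i - y i^2) + σ2b i * (w i - w i^2)
        = -(f i * w i) - σ1b i * y i ^ 2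
          - (σ2b i * w i^2 - (f i + σ1b i + σ2b i) * w i) by ring)]
    rw [Finset.sum_sub_distrib, Finset.sum_sub_distrib, Finset.sum_neg_distrib]
  rw [Pobj, Xi, quad_Gm, hsplit, show f ⬝ᵥ w = ∑ i, f i * w i from rfl]
  set S1 := ∑ i, f i * w i with hS1
  set S2 := ∑ i, σ1b i * y i ^ 2 with hS2
  set S3 := ∑ i, (σ2b i * w i^2 - (f i + σ1b i + σ2b i) * w i) with hS3
  ring

lemma claim2 (hGs : (Gm A B ςb σ1b)ᵀ = Gm A B ςb σ1b) {xb vb : Fin n → ℝ}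
    (hGxb : (Gm A B ςb σ1b).mulVec xb = c)
    (hk : ∀ i, f i + σ1b i + σ2b i = 2 * σ2b i * vb i) (x v : Fin n → ℝ) :
    Xi (Gm A B ςb σ1b) c f σ1b σ2b α ςb x v - Xi (Gm A B ςb σ1b) c f σ1b σ2b α ςb xb vb
      = (1/2) * ((x - xb) ⬝ᵥ (Gm A B ςb σ1b).mulVec (x - xb))
        + ∑ i, σ2b i * (v i - vb i)^2 := by
  set G := Gm A B ςb σ1b with hG
  have hsymm : ∀ u z : Fin n → ℝ, u ⬝ᵥ G.mulVec z = z ⬝ᵥ G.mulVec u := by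
    intro u z
    rw [Matrix.dotProduct_mulVec, ← Matrix.mulVec_transpose, hGs, dotProduct_comm]
  have hxGxb : x ⬝ᵥ G.mulVec xb = c ⬝ᵥ x := by rw [hGxb]; exact dotProduct_comm _ _
  have hxbGx : xb ⬝ᵥ G.mulVec x = c ⬝ᵥ x := by rw [hsymm]; exact hxGxb
  have hxbGxb : xb ⬝ᵥ G.mulVec xb = c ⬝ᵥ xb := by rw [hGxb]; exact dotProduct_comm _ _
  have hexp : (x - xb) ⬝ᵥ G.mulVec (x - xb)
      = x ⬝ᵥ G.mulVec x - c ⬝ᵥ x - c ⬝ᵥ x + c ⬝ᵥ xb := by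
    rw [Matrix.mulVec_sub, dotProduct_sub, sub_dotProduct, sub_dotProduct,
      hxGxb, hxbGx, hxbGxb]
    ring
  have hsum : ∑ i, (σ2b i * v i^2 - (f i + σ1b i + σ2b i) * v i)
      - ∑ i, (σ2b i * vb i^2 - (f i + σ1b i + σ2b i) * vb i)
      = ∑ i, σ2b i * (v i - vb i)^2 := by
    rw [← Finset.sum_sub_distrib]
    exact Finset.sum_congr rfl (fun i _ => by rw [hk i]; ring)
  rw [Xi, Xi, hexp, hxbGxb, ← hsum]
  set Sv := ∑ i, (σ2b i * v i^2 - (f i + σ1b i + σ2b i) * v i) with hSv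
  set Svb := ∑ i, (σ2b i * vb i^2 - (f i + σ1b i + σ2b i) * vb i) with hSvb
  ring
end algebra


theorem global_optimality_relaxed {n : ℕ} (hn : 0 < n)
    (A B : Matrix (Fin n) (Fin n) ℝ) (hA : A.IsSymm) (hB : B.PosSemidef)
    (α : ℝ) (hα : 0 < α) (c f : Fin n → ℝ)
    (ςb : ℝ) (σ1b σ2b : Fin n → ℝ)
    (hmem : (ςb, σ1b, σ2b) ∈ Ssharp A B α)
    (hcrit : fderiv ℝ (Pd A B α c f) (ςb, σ1b, σ2b) = 0)
    (xb vb : Fin n → ℝ)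
    (hx : xb = (Gm A B ςb σ1b)⁻¹.mulVec c)
    (hv : ∀ i, vb i = (f i + σ1b i + σ2b i) / (2 * σ2b i)) :
    ∀ q ∈ XvRelaxed n, Pobj A B α c f xb vb ≤ Pobj A B α c f q.1 q.2 := by

  obtain ⟨hςα, hσ1, hσ2, hGpd⟩ := hmem
  have hGu : IsUnit (Gm A B ςb σ1b) := hGpd.isUnit
  have hGs : (Gm A B ςb σ1b)ᵀ = Gm A B ςb σ1b := Gm_transpose hA hB _ _
  have hdiff := differentiableAt_Pd (A := A) (B := B) (α := α) (c := c) (f := f) hGu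
    (fun j => (hσ2 j).ne')
  have h0 : HasFDerivAt (Pd A B α c f)
      (0 : (ℝ × (Fin n → ℝ) × (Fin n → ℝ)) →L[ℝ] ℝ) (ςb, σ1b, σ2b) := by
    have := hdiff.hasFDerivAt
    rwa [hcrit] at this
  have hGxb : (Gm A B ςb σ1b).mulVec xb = c := by rw [hx]; exact G_mulVec_xb hGu c
  have hA1 : (1/2) * (xb ⬝ᵥ B.mulVec xb) - α - ςb = 0 := by
    have h := stat1 h0 hGu
    rw [quad_inv_conv hGs c, ← hx] at h
    linarith
  have hA2 : ∀ i, vb i = xb i ^ 2 := by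
    intro i
    have h := stat2 h0 hGu i
    rw [quad_inv_conv hGs c, ← hx, quad_diag_single] at h
    rw [hv i]
    linarith
  have hA3 : ∀ i, vb i ^ 2 = vb i := by
    intro i
    have h := stat3 h0 hσ2 i
    have hσ : σ2b i ≠ 0 := (hσ2 i).ne'
    rw [hv i]
    field_simp
    linear_combination (-1 : ℝ) * h
  have hk : ∀ i, f i + σ1b i + σ2b i = 2 * σ2b i * vb i := by
    intro i
    have hσ : σ2b i ≠ 0 := (hσ2 i).ne'
    rw [hv i]
    field_simp
  rintro ⟨x, v⟩ hq
  simp only [XvRelaxed, Set.mem_setOf_eq] at hq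
  have hC1 := claim1 A B α c f ςb σ1b σ2b x v
  have hC1b := claim1 A B α c f ςb σ1b σ2b xb vb
  have hC2 := claim2 (α := α) hGs hGxb hk x v
  have hzero : Pobj A B α c f xb vb - Xi (Gm A B ςb σ1b) c f σ1b σ2b α ςb xb vb = 0 := by
    rw [hC1b, hA1]
    have h2 : ∑ i, (σ1b i * (vb i - xb i^2) + σ2b i * (vb i - vb i^2)) = 0 := by
      apply Finset.sum_eq_zero
      intro i _
      have e1 : vb i - xb i ^ 2 = 0 := by rw [hA2 i]; ring
      have e2 : vb i - vb i ^ 2 = 0 := by rw [hA3 i]; ring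
      rw [e1, e2]
      ring
    rw [h2]
    norm_num
  have hpos1 : 0 ≤ Pobj A B α c f x v - Xi (Gm A B ςb σ1b) c f σ1b σ2b α ςb x v := by
    rw [hC1]
    have hs : 0 ≤ ∑ i, (σ1b i * (v i - x i^2) + σ2b i * (v i - v i^2)) := by
      apply Finset.sum_nonneg
      intro i _
      have h1 := (hq i).1
      have h2 := (hq i).2
      have e1 : 0 ≤ σ1b i * (v i - x i^2) := mul_nonneg (hσ1 i) (by linarith)
      have e2 : 0 ≤ σ2b i * (v i - v i^2) := mul_nonneg (hσ2 i).le (by nlinarith [h2])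
      linarith
    have hsq := sq_nonneg ((1/2) * (x ⬝ᵥ B.mulVec x) - α - ςb)
    linarith
  have hpos2 : 0 ≤ Xi (Gm A B ςb σ1b) c f σ1b σ2b α ςb x v
      - Xi (Gm A B ςb σ1b) c f σ1b σ2b α ςb xb vb := by
    rw [hC2]
    have hquad : 0 ≤ (x - xb) ⬝ᵥ (Gm A B ςb σ1b).mulVec (x - xb) := by
      exact hGpd.posSemidef.dotProduct_mulVec_nonneg (x - xb)
    have hsum : 0 ≤ ∑ i, σ2b i * (v i - vb i)^2 :=
      Finset.sum_nonneg fun i _ => mul_nonneg (hσ2 i).le (sq_nonneg _)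
    linarith
  linarith [hzero, hpos1, hpos2]
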